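/- The radarization map Rad_v acts as the identity on all vectors orthogonal to both the time axis and the direction of motion: if x₀ = 0 and x₁v_x + x₂v_y + x₃v_z = 0, then Rad_v(x) = x. -/

import Mathlib

noncomputable section
open Classical
open Matrix

/-- Euclidean norm of a velocity vector in `ℝ³`. -/
def nv (v : Fin 3 → ℝ) : ℝ := Real.sqrt ((v 0)^2 + (v 1)^2 + (v 2)^2)

/-- The rotation matrix used when `v_y ≠ 0` or `v_z ≠ 0`. -/
def rotMatrix (vx vy vz : ℝ) : Matrix (Fin 4) (Fin 4) ℝ :=
  (Real.sqrt (vx^2 + vy^2 + vz^2))⁻¹ •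
    ![![Real.sqrt (vx^2 + vy^2 + vz^2), 0, 0, 0],
      ![0, -vx, -vy, -vz],
      ![0, vy, -vx - vz^2 * (Real.sqrt (vx^2 + vy^2 + vz^2) - vx) / (vy^2 + vz^2),
        vy * vz * (Real.sqrt (vx^2 + vy^2 + vz^2) - vx) / (vy^2 + vz^2)],
      ![0, vz, vy * vz * (Real.sqrt (vx^2 + vy^2 + vz^2) - vx) / (vy^2 + vz^2),
        -vx - vy^2 * (Real.sqrt (vx^2 + vy^2 + vz^2) - vx) / (vy^2 + vz^2)]]

/-- The spatial rotation `R_v` taking direction `(1, v)` to `(1, -|v|, 0, 0)`. -/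
def Rv (v : Fin 3 → ℝ) : Matrix (Fin 4) (Fin 4) ℝ :=
  if v 1 ≠ 0 ∨ v 2 ≠ 0 then rotMatrix (v 0) (v 1) (v 2)
  else if 0 < v 0 then
    ![![1, 0, 0, 0], ![0, -1, 0, 0], ![0, 0, -1, 0], ![0, 0, 0, -1]]
  else 1

/-- The Galilean boost `G_w : (t,x,y,z) ↦ (t, x + wt, y, z)`. -/
def galBoost (w : ℝ) (x : Fin 4 → ℝ) : Fin 4 → ℝ :=
  ![x 0, x 1 + w * x 0, x 2, x 3]

/-- The Poincaré–Einstein synchronisation matrix `E_w`. -/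
def Emat (c w : ℝ) : Matrix (Fin 4) (Fin 4) ℝ :=
  ![![1 / (1 - w^2/c^2), (-w/c^2) / (1 - w^2/c^2), 0, 0],
    ![-w / (1 - w^2/c^2), 1 / (1 - w^2/c^2), 0, 0],
    ![0, 0, 1 / Real.sqrt (1 - w^2/c^2), 0],
    ![0, 0, 0, 1 / Real.sqrt (1 - w^2/c^2)]]

/-- The radarization map `Rad_v = R_v⁻¹ ∘ S_{|v|} ∘ E_{|v|} ∘ G_{|v|} ∘ R_v`. -/
def rad (c : ℝ) (v : Fin 3 → ℝ) (x : Fin 4 → ℝ) : Fin 4 → ℝ :=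
  (Rv v)⁻¹.mulVec (Real.sqrt (1 - (nv v)^2/c^2) •
    (Emat c (nv v)).mulVec (galBoost (nv v) ((Rv v).mulVec x)))

/-- The middle part of the radarization fixes vectors with vanishing `t` and `x`
components. -/
lemma rad_mid (c w : ℝ) (hc : 0 < c) (hw : 0 ≤ w) (hwc : w < c) (y : Fin 4 → ℝ)
    (h0 : y 0 = 0) (h1 : y 1 = 0 ∨ w = 0) :
    Real.sqrt (1 - w^2/c^2) • (Emat c w).mulVec (galBoost w y) = y := by
  have hpos : 0 < 1 - w^2/c^2 := by
    have h : w^2 < c^2 := by nlinarith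
    have : w^2/c^2 < 1 := (div_lt_one (by positivity)).2 h
    linarith
  have hcw2 : (0:ℝ) < c^2 - w^2 := by nlinarith
  have hcw : Real.sqrt (c^2 - w^2) ≠ 0 := by positivity
  have hs : Real.sqrt (1 - w^2/c^2) ≠ 0 := by positivity
  funext i
  fin_cases i <;>
    simp [Emat, galBoost, Matrix.mulVec, dotProduct, Fin.sum_univ_four, h0] <;>
    rcases h1 with h1 | h1 <;>
    (try simp [h1]) <;>
    field_simp <;> ring_nf

/-- The core of the rotation matrix, with `s` standing for the norm of `v`. -/
def rotCore (vx vy vz s : ℝ) : Matrix (Fin 4) (Fin 4) ℝ :=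
    ![![s, 0, 0, 0],
      ![0, -vx, -vy, -vz],
      ![0, vy, -vx - vz^2 * (s - vx) / (vy^2 + vz^2),
        vy * vz * (s - vx) / (vy^2 + vz^2)],
      ![0, vz, vy * vz * (s - vx) / (vy^2 + vz^2),
        -vx - vy^2 * (s - vx) / (vy^2 + vz^2)]]

lemma rotCore_orth (vx vy vz s : ℝ) (hs : s^2 = vx^2+vy^2+vz^2) (hs0 : 0 < s)
    (hd : 0 < vy^2 + vz^2) :
    (rotCore vx vy vz s)ᵀ * rotCore vx vy vz s = (s^2) • 1 := by
  have hsne : s ≠ 0 := hs0.ne'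
  have hdne : vy^2 + vz^2 ≠ 0 := hd.ne'
  ext i j
  simp only [Matrix.mul_apply, Matrix.transpose_apply]
  fin_cases i <;> fin_cases j <;>
    simp [rotCore, Matrix.mul_apply, Matrix.one_apply, Fin.sum_univ_four,
      Matrix.transpose_apply, Matrix.vecHead, Matrix.vecTail]
  all_goals try field_simp
  all_goals try ring_nf
  all_goals try linear_combination (-1 : ℝ) * hs
  all_goals try linear_combination (-(vy^2*(vy^2+vz^2))) * hs
  all_goals try linear_combination (-(vz^2*(vy^2+vz^2))) * hs
  all_goals try linear_combination (-(vy*vz*(vy^2+vz^2))) * hs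

lemma rotMatrix_eq (vx vy vz : ℝ) :
    rotMatrix vx vy vz =
      (Real.sqrt (vx^2 + vy^2 + vz^2))⁻¹ •
        rotCore vx vy vz (Real.sqrt (vx^2 + vy^2 + vz^2)) := rfl

/-- `Rad_v` acts as the identity on vectors orthogonal to both the time axis and
the direction of motion. -/
theorem rad_fixes_orthogonal (c : ℝ) (hc : 0 < c) (v : Fin 3 → ℝ) (hv : nv v < c)
    (x : Fin 4 → ℝ) (ht : x 0 = 0)
    (horth : x 1 * v 0 + x 2 * v 1 + x 3 * v 2 = 0) :
    rad c v x = x := by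
  have hw0 : 0 ≤ nv v := Real.sqrt_nonneg _
  have key : ((Rv v)ᵀ * Rv v = 1) ∧ (Rv v).mulVec x 0 = 0 ∧
      ((Rv v).mulVec x 1 = 0 ∨ nv v = 0) := by
    by_cases h : v 1 ≠ 0 ∨ v 2 ≠ 0
    · have hd : 0 < (v 1)^2 + (v 2)^2 := by
        rcases h with h | h
        · nlinarith [sq_nonneg (v 2), pow_pos (abs_pos.2 h) 2, sq_abs (v 1)]
        · nlinarith [sq_nonneg (v 1), pow_pos (abs_pos.2 h) 2, sq_abs (v 2)]
      have hP : 0 < (v 0)^2 + (v 1)^2 + (v 2)^2 := by nlinarith [sq_nonneg (v 0)]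
      have hs0 : 0 < Real.sqrt ((v 0)^2 + (v 1)^2 + (v 2)^2) := Real.sqrt_pos.2 hP
      have hsq : Real.sqrt ((v 0)^2 + (v 1)^2 + (v 2)^2) ^ 2
          = (v 0)^2 + (v 1)^2 + (v 2)^2 := Real.sq_sqrt hP.le
      have hsne : Real.sqrt ((v 0)^2 + (v 1)^2 + (v 2)^2) ≠ 0 := hs0.ne'
      have hRv : Rv v = rotMatrix (v 0) (v 1) (v 2) := if_pos h
      refine ⟨?_, ?_, Or.inl ?_⟩
      · rw [hRv, rotMatrix_eq, Matrix.transpose_smul, Matrix.smul_mul,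
          Matrix.mul_smul, rotCore_orth _ _ _ _ hsq hs0 hd, smul_smul, smul_smul]
        rw [show (Real.sqrt ((v 0)^2 + (v 1)^2 + (v 2)^2))⁻¹ *
            (Real.sqrt ((v 0)^2 + (v 1)^2 + (v 2)^2))⁻¹ *
              Real.sqrt ((v 0)^2 + (v 1)^2 + (v 2)^2) ^ 2 = 1 by field_simp,
          one_smul]
      · rw [hRv, rotMatrix_eq, Matrix.smul_mulVec]
        simp [rotCore, Matrix.mulVec, dotProduct, Fin.sum_univ_four, ht]
      · rw [hRv, rotMatrix_eq, Matrix.smul_mulVec]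
        simp only [rotCore, Matrix.mulVec, dotProduct, Fin.sum_univ_four,
          Pi.smul_apply, smul_eq_mul]
        simp [Matrix.vecHead, Matrix.vecTail]
        exact Or.inr (by linarith)
    · push_neg at h
      obtain ⟨h1, h2⟩ := h
      rw [Rv, if_neg (by push_neg; exact ⟨h1, h2⟩)]
      by_cases h0 : 0 < v 0
      · erw [if_pos h0]
        have hx1 : x 1 = 0 := by
          have : x 1 * v 0 = 0 := by rw [h1, h2] at horth; linarith [horth]
          exact (mul_eq_zero.1 this).resolve_right h0.ne'
        refine ⟨?_, ?_, Or.inl ?_⟩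
        · ext i j
          erw [Matrix.mul_apply]
          simp only [Matrix.transpose, Matrix.of_apply]
          fin_cases i <;> fin_cases j <;>
            simp [Matrix.mul_apply, Matrix.one_apply, Fin.sum_univ_four,
              Matrix.transpose_apply, Matrix.vecHead, Matrix.vecTail]
        · simp [Matrix.mulVec, dotProduct, Fin.sum_univ_four, ht]
        · simp [Matrix.mulVec, dotProduct, Fin.sum_univ_four, hx1,
            Matrix.vecHead, Matrix.vecTail]
      · erw [if_neg h0]
        refine ⟨by simp, by simp [ht], ?_⟩
        rcases eq_or_lt_of_le (not_lt.1 h0) with h00 | h00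
        · right
          simp [nv, h00, h1, h2]
        · left
          have hx1 : x 1 = 0 := by
            have : x 1 * v 0 = 0 := by rw [h1, h2] at horth; linarith [horth]
            exact (mul_eq_zero.1 this).resolve_right h00.ne
          simp [hx1]
  obtain ⟨hRT, hy0, hy1⟩ := key
  have hinv : (Rv v)⁻¹ = (Rv v)ᵀ := Matrix.inv_eq_left_inv hRT
  rw [rad, rad_mid c (nv v) hc hw0 hv _ hy0 hy1, hinv, Matrix.mulVec_mulVec, hRT,
    Matrix.one_mulVec]
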